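/- Let H be a nontrivial finitely generated normal subgroup of G such that H is not contained in ι₁(G₁) and not contained in ι₂(G₂). Then every right coset of H in G is essential. -/

import Mathlib

open Monoid

section EssentialCosets

variable {A : Type} [Group A] {Gf : Bool → Type} [∀ i, Group (Gf i)]
  (φ : ∀ i : Bool, A →* Gf i)

/-- `g` lies in the image `ι_i(G_i)` of the `i`-th factor of the pushout. -/
def InFactor (i : Bool) (g : PushoutI φ) : Prop :=
  g ∈ (PushoutI.of (φ := φ) i).range

/-- `L = (g₁, …, g_n)` is a normal decomposition of `g ∈ G = G₁ *_A G₂`: it is a nonempty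
sequence with product `g`, each entry is a nontrivial element of `ι₁(G₁) ∪ ι₂(G₂)`,
consecutive entries do not lie in the same factor, and if `n > 1` then no entry lies in
`ι_A(A)`. -/
def IsNormalDecomp (g : PushoutI φ) (L : List (PushoutI φ)) : Prop :=
  L ≠ [] ∧ L.prod = g ∧
    (∀ x ∈ L, x ≠ 1 ∧ (InFactor φ true x ∨ InFactor φ false x)) ∧
    (∀ n : ℕ, ∀ x y : PushoutI φ, L[n]? = some x → L[n + 1]? = some y →
      ¬ (InFactor φ true x ∧ InFactor φ true y) ∧
      ¬ (InFactor φ false x ∧ InFactor φ false y)) ∧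
    (1 < L.length → ∀ x ∈ L, x ∉ (PushoutI.base φ).range)

/-- The right coset `H·c` is *essential* if either `H·c = H`, or there is `h ∈ H` with a
normal decomposition `(h₁, …, h_n)`, an index `0 ≤ m < n`, and an element `s` of a factor
`ι_i(G_i)` containing `h_{m+1}`, such that `H·c = H·h₁⋯h_m·s`. -/
def IsEssentialCoset (H : Subgroup (PushoutI φ)) (c : PushoutI φ) : Prop :=
  c ∈ H ∨ ∃ (L : List (PushoutI φ)) (m : ℕ) (s : PushoutI φ),
    IsNormalDecomp φ L.prod L ∧ L.prod ∈ H ∧ m < L.length ∧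
    (∃ (i : Bool) (x : PushoutI φ), L[m]? = some x ∧ InFactor φ i x ∧ InFactor φ i s) ∧
    c * ((L.take m).prod * s)⁻¹ ∈ H

/-- The collection of essential right cosets `H·c` of `H` in `G`, as a set of subsets of `G`. -/
def essentialCosets (H : Subgroup (PushoutI φ)) : Set (Set (PushoutI φ)) :=
  {S | ∃ c : PushoutI φ, IsEssentialCoset φ H c ∧ S = {g : PushoutI φ | g * c⁻¹ ∈ H}}

end EssentialCosets

section Work

open List

variable {A : Type} [Group A] {Gf : Bool → Type} [∀ i, Group (Gf i)]
  {φ : ∀ i : Bool, A →* Gf i}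

/-- product in the pushout of a list of letters -/
def prodP (φ : ∀ i : Bool, A →* Gf i) (L : List (Σ i, Gf i)) : PushoutI φ :=
  (L.map fun p => PushoutI.of (φ := φ) p.1 p.2).prod

/-- reduced list of letters -/
def Red (φ : ∀ i : Bool, A →* Gf i) (L : List (Σ i, Gf i)) : Prop :=
  (∀ p ∈ L, p.2 ∉ (φ p.1).range) ∧ L.IsChain (fun p q => p.1 ≠ q.1)

theorem prodP_nil : prodP φ [] = 1 := rfl

theorem prodP_cons (p : (i : Bool) × Gf i) (L : List (Σ i, Gf i)) :
    prodP φ (p :: L) = PushoutI.of (φ := φ) p.1 p.2 * prodP φ L := by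
  simp [prodP]

theorem prodP_append (L M : List (Σ i, Gf i)) :
    prodP φ (L ++ M) = prodP φ L * prodP φ M := by
  simp [prodP]

theorem prodP_singleton (p : (i : Bool) × Gf i) :
    prodP φ [p] = PushoutI.of (φ := φ) p.1 p.2 := by
  simp [prodP]

theorem of_mem_base_iff (hφ : ∀ i, Function.Injective (φ i)) (i : Bool) (g : Gf i) :
    PushoutI.of (φ := φ) i g ∈ (PushoutI.base φ).range ↔ g ∈ (φ i).range := by
  constructor
  · rintro ⟨a, ha⟩
    exact ⟨a, PushoutI.of_injective hφ i ((PushoutI.of_apply_eq_base φ i a).trans ha)⟩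
  · rintro ⟨a, rfl⟩
    exact ⟨a, (PushoutI.of_apply_eq_base φ i a).symm⟩

theorem of_ne_one (hφ : ∀ i, Function.Injective (φ i)) {i : Bool} {g : Gf i}
    (hg : g ∉ (φ i).range) : PushoutI.of (φ := φ) i g ≠ 1 := by
  intro h
  have hg1 : g = 1 := PushoutI.of_injective hφ i (by rw [h, map_one])
  exact hg ⟨1, by rw [map_one, hg1]⟩

theorem not_inFactor (hφ : ∀ i, Function.Injective (φ i)) {i t : Bool} (hit : i ≠ t)
    {g : Gf i} (hg : g ∉ (φ i).range) :
    ¬ InFactor φ t (PushoutI.of (φ := φ) i g) := by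
  intro h
  apply hg
  rw [← of_mem_base_iff hφ, ← PushoutI.inf_of_range_eq_base_range hφ hit]
  exact ⟨⟨g, rfl⟩, h⟩

end Work

section Work2
open List
variable {A : Type} [Group A] {Gf : Bool → Type} [∀ i, Group (Gf i)]
  {φ : ∀ i : Bool, A →* Gf i}

theorem red_decomp (hφ : ∀ i, Function.Injective (φ i)) {L : List (Σ i, Gf i)}
    (hL : Red φ L) (hne : L ≠ []) :
    IsNormalDecomp φ (prodP φ L) (L.map fun p => PushoutI.of (φ := φ) p.1 p.2) := by
  obtain ⟨hlet, hch⟩ := hL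
  refine ⟨by simpa using hne, rfl, ?_, ?_, ?_⟩
  · intro x hx
    obtain ⟨p, hp, rfl⟩ := List.mem_map.mp hx
    refine ⟨of_ne_one hφ (hlet p hp), ?_⟩
    obtain ⟨i, g⟩ := p
    cases i
    · exact Or.inr ⟨g, rfl⟩
    · exact Or.inl ⟨g, rfl⟩
  · intro n x y hx hy
    rw [List.getElem?_map] at hx hy
    obtain ⟨p, hp, rfl⟩ := Option.map_eq_some_iff.mp hx
    obtain ⟨q, hq, rfl⟩ := Option.map_eq_some_iff.mp hy
    have hpq : p.1 ≠ q.1 := by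
      rw [List.isChain_iff_getElem] at hch
      have h1 := List.getElem?_eq_some_iff.mp hp
      have h2 := List.getElem?_eq_some_iff.mp hq
      obtain ⟨hn1, e1⟩ := h1
      obtain ⟨hn2, e2⟩ := h2
      have := hch n (by omega)
      rwa [e1, e2] at this
    have hpm := hlet p (List.mem_of_getElem? hp)
    have hqm := hlet q (List.mem_of_getElem? hq)
    constructor
    · rintro ⟨ha, hb⟩
      by_cases h : p.1 = true
      · exact not_inFactor hφ (fun hq2 => hpq (h.trans hq2.symm)) hqm hb
      · exact not_inFactor hφ h hpm ha
    · rintro ⟨ha, hb⟩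
      by_cases h : p.1 = false
      · exact not_inFactor hφ (fun hq2 => hpq (h.trans hq2.symm)) hqm hb
      · exact not_inFactor hφ h hpm ha
  · intro _ x hx hmem
    obtain ⟨p, hp, rfl⟩ := List.mem_map.mp hx
    exact hlet p hp ((of_mem_base_iff hφ p.1 p.2).mp hmem)

end Work2

section Work3
open List
variable {A : Type} [Group A] {Gf : Bool → Type} [∀ i, Group (Gf i)]
  {φ : ∀ i : Bool, A →* Gf i}

def invL (L : List (Σ i, Gf i)) : List (Σ i, Gf i) :=
  (L.map fun p => ⟨p.1, p.2⁻¹⟩).reverse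

theorem invL_length (L : List (Σ i, Gf i)) : (invL L).length = L.length := by
  simp [invL]

theorem invL_fst (L : List (Σ i, Gf i)) :
    (invL L).map Sigma.fst = (L.map Sigma.fst).reverse := by
  simp [invL, List.map_reverse, List.map_map]

theorem red_invL {L : List (Σ i, Gf i)} (hL : Red φ L) : Red φ (invL L) := by
  obtain ⟨hlet, hch⟩ := hL
  constructor
  · intro p hp
    rw [invL, List.mem_reverse, List.mem_map] at hp
    obtain ⟨q, hq, rfl⟩ := hp
    simpa using hlet q hq
  · rw [invL, List.isChain_reverse, List.isChain_map]
    exact hch.imp (fun a b h => Ne.symm h)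

theorem prodP_invL (L : List (Σ i, Gf i)) : prodP φ (invL L) = (prodP φ L)⁻¹ := by
  rw [invL, prodP, List.map_reverse, List.prod_reverse_noncomm, List.map_map, List.map_map]
  rw [prodP]
  exact congrArg (fun x => x⁻¹) (congrArg List.prod (List.map_congr_left fun p _ => by
    simp [Function.comp]))

end Work3

section Work4
open List
variable {A : Type} [Group A] {Gf : Bool → Type} [∀ i, Group (Gf i)]
  {φ : ∀ i : Bool, A →* Gf i}

theorem not_range_mul_range {i : Bool} {g : Gf i} (hg : g ∉ (φ i).range) (x : A) :
    g * φ i x ∉ (φ i).range := by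
  rintro ⟨y, hy⟩
  exact hg ⟨y * x⁻¹, by rw [map_mul, map_inv, hy, mul_inv_cancel_right]⟩

theorem mul_letter (hφ : ∀ i, Function.Injective (φ i)) :
    ∀ (U : List (Σ i, Gf i)) (v : Σ i, Gf i), Red φ U → 2 ≤ U.length →
    ∃ R : List (Σ i, Gf i), Red φ R ∧
      prodP φ R = prodP φ U * PushoutI.of (φ := φ) v.1 v.2 ∧
      U.length - 1 ≤ R.length ∧ R.take (U.length - 2) = U.take (U.length - 2) ∧
      (R.map Sigma.fst).head? = (U.map Sigma.fst).head?
  | [], v => by intro _ h; simp at h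
  | [a], v => by intro _ h; simp at h
  | [a, b], v => by
    rintro ⟨hlet, hch⟩ _
    obtain ⟨ai, ag⟩ := a
    obtain ⟨bi, bg⟩ := b
    obtain ⟨vi, vg⟩ := v
    have ha : ag ∉ (φ ai).range := hlet ⟨ai, ag⟩ (by simp)
    have hb : bg ∉ (φ bi).range := hlet ⟨bi, bg⟩ (by simp)
    have hab : ai ≠ bi := (List.isChain_cons_cons.mp hch).1
    by_cases hv : vg ∈ (φ vi).range
    · obtain ⟨x, hx⟩ := hv
      have key : PushoutI.of (φ := φ) bi (φ bi x) = PushoutI.of (φ := φ) vi vg := by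
        rw [PushoutI.of_apply_eq_base, ← hx, PushoutI.of_apply_eq_base]
      refine ⟨[⟨ai, ag⟩, ⟨bi, bg * φ bi x⟩], ⟨?_, ?_⟩, ?_, by simp, by simp, by simp⟩
      · intro p hp
        simp only [List.mem_cons, List.not_mem_nil, or_false] at hp
        rcases hp with rfl | rfl
        · exact ha
        · exact not_range_mul_range hb x
      · exact List.isChain_cons_cons.mpr ⟨hab, List.isChain_singleton _⟩
      · simp only [prodP, List.map_cons, List.map_nil, List.prod_cons, List.prod_nil, mul_one]
        rw [map_mul, key, mul_assoc]
    · by_cases hvb : vi = bi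
      · subst hvb
        by_cases ht : bg * vg ∈ (φ vi).range
        · obtain ⟨x, hx⟩ := ht
          have key : PushoutI.of (φ := φ) ai (φ ai x) =
              PushoutI.of (φ := φ) vi bg * PushoutI.of (φ := φ) vi vg := by
            rw [PushoutI.of_apply_eq_base, ← PushoutI.of_apply_eq_base φ vi, hx, map_mul]
          refine ⟨[⟨ai, ag * φ ai x⟩], ⟨?_, List.isChain_singleton _⟩, ?_, by simp, by simp, by simp⟩
          · intro p hp
            simp only [List.mem_cons, List.not_mem_nil, or_false] at hp
            rcases hp with rfl
            exact not_range_mul_range ha x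
          · simp only [prodP, List.map_cons, List.map_nil, List.prod_cons, List.prod_nil, mul_one]
            rw [map_mul, key, mul_assoc]
        · refine ⟨[⟨ai, ag⟩, ⟨vi, bg * vg⟩], ⟨?_, ?_⟩, ?_, by simp, by simp, by simp⟩
          · intro p hp
            simp only [List.mem_cons, List.not_mem_nil, or_false] at hp
            rcases hp with rfl | rfl
            · exact ha
            · exact ht
          · exact List.isChain_cons_cons.mpr ⟨hab, List.isChain_singleton _⟩
          · simp only [prodP, List.map_cons, List.map_nil, List.prod_cons, List.prod_nil, mul_one]
            rw [map_mul, mul_assoc]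
      · refine ⟨[⟨ai, ag⟩, ⟨bi, bg⟩, ⟨vi, vg⟩], ⟨?_, ?_⟩, ?_, by simp, by simp, by simp⟩
        · intro p hp
          simp only [List.mem_cons, List.not_mem_nil, or_false] at hp
          rcases hp with rfl | rfl | rfl
          · exact ha
          · exact hb
          · exact hv
        · exact List.isChain_cons_cons.mpr ⟨hab,
            List.isChain_cons_cons.mpr ⟨fun h => hvb h.symm, List.isChain_singleton _⟩⟩
        · simp [prodP, mul_assoc]
  | a :: b :: c :: U', v => by
    rintro ⟨hlet, hch⟩ _
    obtain ⟨R', hR', hprod, hlen', htake, hhead⟩ :=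
      mul_letter hφ (b :: c :: U') v
        ⟨fun p hp => hlet p (List.mem_cons_of_mem _ hp), (List.isChain_cons_cons.mp hch).2⟩
        (by simp only [List.length_cons]; omega)
    obtain ⟨r, R'', rfl⟩ : ∃ r R'', R' = r :: R'' := by
      cases R' with
      | nil => simp at hhead
      | cons r R'' => exact ⟨r, R'', rfl⟩
    have hr : r.1 = b.1 := by simpa using hhead
    refine ⟨a :: r :: R'', ⟨?_, ?_⟩, ?_, ?_, ?_, by simp⟩
    · intro p hp
      rcases List.mem_cons.mp hp with rfl | hp
      · exact hlet _ (by simp)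
      · exact hR'.1 p hp
    · exact List.isChain_cons_cons.mpr ⟨by rw [hr]; exact (List.isChain_cons_cons.mp hch).1, hR'.2⟩
    · rw [prodP_cons, hprod]; simp [prodP_cons, mul_assoc]
    · simp only [List.length_cons] at *
      omega
    · simp only [List.length_cons] at htake ⊢
      rw [show U'.length + 3 - 2 = U'.length + 1 by omega]
      rw [show U'.length + 2 - 2 = U'.length by omega] at htake
      rw [List.take_succ_cons, List.take_succ_cons, htake]

end Work4

section Work5
open List
variable {A : Type} [Group A] {Gf : Bool → Type} [∀ i, Group (Gf i)]
  {φ : ∀ i : Bool, A →* Gf i}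

theorem take_eq_of_take_eq {α : Type*} {l m : List α} {b d : ℕ} (hd : d ≤ b)
    (h : l.take b = m.take b) : l.take d = m.take d := by
  rw [← min_eq_left hd, ← List.take_take, h, List.take_take]

theorem mul_word (hφ : ∀ i, Function.Injective (φ i)) :
    ∀ (V U : List (Σ i, Gf i)), Red φ U → V.length + 2 ≤ U.length →
    ∃ R : List (Σ i, Gf i), Red φ R ∧ prodP φ R = prodP φ U * prodP φ V ∧
      U.length - V.length ≤ R.length ∧
      R.take (U.length - V.length - 2) = U.take (U.length - V.length - 2)
  | [], U => fun hU _ => ⟨U, hU, by simp [prodP_nil], by simp, by simp⟩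
  | v :: V', U => by
    intro hU hlen
    obtain ⟨R₁, hR₁, hprod₁, hlen₁, htake₁, _⟩ := mul_letter hφ U v hU (by omega)
    obtain ⟨R, hR, hprod, hlen2, htake2⟩ := mul_word hφ V' R₁ hR₁ (by
      simp only [List.length_cons] at hlen; omega)
    refine ⟨R, hR, ?_, ?_, ?_⟩
    · rw [hprod, hprod₁, prodP_cons, mul_assoc]
    · simp only [List.length_cons] at *
      omega
    · simp only [List.length_cons] at *
      have e1 : R.take (U.length - (V'.length + 1) - 2) = R₁.take (U.length - (V'.length + 1) - 2) :=
        take_eq_of_take_eq (by omega) htake2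
      have e2 : R₁.take (U.length - (V'.length + 1) - 2) = U.take (U.length - (V'.length + 1) - 2) :=
        take_eq_of_take_eq (by omega) htake₁
      rw [e1, e2]

theorem pstep (hφ : ∀ i, Function.Injective (φ i)) {x : PushoutI φ}
    (hx : (∃ i y, x = PushoutI.of (φ := φ) i y) ∨
      (∃ L, Red φ L ∧ 2 ≤ L.length ∧ prodP φ L = x)) (v : Σ i, Gf i) :
    (∃ i y, x * PushoutI.of (φ := φ) v.1 v.2 = PushoutI.of (φ := φ) i y) ∨
      (∃ L, Red φ L ∧ 2 ≤ L.length ∧ prodP φ L = x * PushoutI.of (φ := φ) v.1 v.2) := by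
  rcases hx with ⟨i', y', rfl⟩ | ⟨L, hL, hlen, rfl⟩
  · by_cases hv : v.2 ∈ (φ v.1).range
    · obtain ⟨t, ht⟩ := hv
      refine Or.inl ⟨i', y' * φ i' t, ?_⟩
      rw [map_mul]
      congr 1
      rw [PushoutI.of_apply_eq_base, ← ht, PushoutI.of_apply_eq_base]
    · by_cases hy' : y' ∈ (φ i').range
      · obtain ⟨t', ht'⟩ := hy'
        refine Or.inl ⟨v.1, φ v.1 t' * v.2, ?_⟩
        rw [map_mul]
        congr 1
        rw [PushoutI.of_apply_eq_base, ← ht', PushoutI.of_apply_eq_base]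
      · by_cases hiv : i' = v.1
        · subst hiv
          exact Or.inl ⟨v.1, y' * v.2, (map_mul _ _ _).symm⟩
        · refine Or.inr ⟨[⟨i', y'⟩, v], ⟨?_, ?_⟩, by simp, ?_⟩
          · intro p hp
            simp only [List.mem_cons, List.not_mem_nil, or_false] at hp
            rcases hp with rfl | rfl
            · exact hy'
            · exact hv
          · exact List.isChain_cons_cons.mpr ⟨hiv, List.isChain_singleton _⟩
          · simp [prodP]
  · obtain ⟨R, hR, hprod, hlenR, _, _⟩ := mul_letter hφ L v hL hlen
    match R, hprod, hlenR with
    | [], hprod, hlenR => exact absurd hlenR (by simp; omega)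
    | [p], hprod, _ => exact Or.inl ⟨p.1, p.2, by rw [← hprod, prodP_singleton]⟩
    | p :: q :: R'', hprod, _ =>
      exact Or.inr ⟨p :: q :: R'', hR, by simp only [List.length_cons]; omega, hprod⟩

theorem exists_red (hφ : ∀ i, Function.Injective (φ i)) (g : PushoutI φ) :
    (∃ i y, g = PushoutI.of (φ := φ) i y) ∨
      (∃ L, Red φ L ∧ 2 ≤ L.length ∧ prodP φ L = g) := by
  have pmulL : ∀ (L : List (Σ i, Gf i)) (x : PushoutI φ),
      ((∃ i y, x = PushoutI.of (φ := φ) i y) ∨ (∃ L', Red φ L' ∧ 2 ≤ L'.length ∧ prodP φ L' = x)) →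
      ((∃ i y, x * prodP φ L = PushoutI.of (φ := φ) i y) ∨
        (∃ L', Red φ L' ∧ 2 ≤ L'.length ∧ prodP φ L' = x * prodP φ L)) := by
    intro L
    induction L with
    | nil => intro x hx; simpa [prodP_nil] using hx
    | cons v L' ih =>
      intro x hx
      have := ih (x * PushoutI.of (φ := φ) v.1 v.2) (pstep hφ hx v)
      rwa [prodP_cons, ← mul_assoc]
  induction g using PushoutI.induction_on with
  | of i g => exact Or.inl ⟨i, g, rfl⟩
  | base h => exact Or.inl ⟨true, φ true h, (PushoutI.of_apply_eq_base φ true h).symm⟩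
  | mul x y hx hy =>
    rcases hy with ⟨i, y', rfl⟩ | ⟨L, _, _, rfl⟩
    · exact pstep hφ hx ⟨i, y'⟩
    · exact pmulL L x hx

end Work5

section Work6
open List
variable {A : Type} [Group A] {Gf : Bool → Type} [∀ i, Group (Gf i)]
  {φ : ∀ i : Bool, A →* Gf i}

theorem nonsur (hφ : ∀ i, Function.Injective (φ i)) {H : Subgroup (PushoutI φ)} (i : Bool)
    (hH : ¬ H ≤ (PushoutI.of (φ := φ) (!i)).range) : ∃ w : Gf i, w ∉ (φ i).range := by
  by_contra hcon
  push_neg at hcon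
  apply hH
  have key : ∀ g : PushoutI φ, g ∈ (PushoutI.of (φ := φ) (!i)).range := by
    intro g
    induction g using PushoutI.induction_on with
    | of j y =>
      by_cases hj : j = !i
      · subst hj; exact ⟨y, rfl⟩
      · have hji : j = i := by revert hj; cases i <;> cases j <;> simp
        subst hji
        obtain ⟨t, ht⟩ := hcon y
        exact ⟨φ (!j) t, by
          rw [PushoutI.of_apply_eq_base, ← PushoutI.of_apply_eq_base φ j, ht]⟩
    | base h => exact ⟨φ (!i) h, PushoutI.of_apply_eq_base φ (!i) h⟩
    | mul x y hx hy => exact mul_mem hx hy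
  exact fun x _ => key x

theorem directional (hφ : ∀ i, Function.Injective (φ i)) {H : Subgroup (PushoutI φ)}
    (hnormal : H.Normal)
    (h1 : ¬ H ≤ (PushoutI.of (φ := φ) true).range)
    (h2 : ¬ H ≤ (PushoutI.of (φ := φ) false).range) (j : Bool) :
    ∃ Z : List (Σ i, Gf i), Red φ Z ∧ Z ≠ [] ∧ prodP φ Z ∈ H ∧
      (Z.map Sigma.fst).head? = some j := by
  have hHj : ∀ t : Bool, ¬ H ≤ (PushoutI.of (φ := φ) (!t)).range := by
    intro t
    cases t
    · exact h1
    · exact h2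
  -- step 1 : some nonempty reduced list with product in H
  obtain ⟨a, haH, haR⟩ := SetLike.not_le_iff_exists.mp h1
  have step1 : ∃ L₀ : List (Σ i, Gf i), Red φ L₀ ∧ L₀ ≠ [] ∧ prodP φ L₀ ∈ H := by
    rcases exists_red hφ a with ⟨i, y, rfl⟩ | ⟨L, hL, hlen, rfl⟩
    · have hy : y ∉ (φ i).range := by
        rintro ⟨t, rfl⟩
        exact haR ⟨φ true t, by
          rw [PushoutI.of_apply_eq_base, ← PushoutI.of_apply_eq_base φ i]⟩
      refine ⟨[⟨i, y⟩], ⟨?_, List.isChain_singleton _⟩, by simp, by rwa [prodP_singleton]⟩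
      intro p hp
      simp only [List.mem_cons, List.not_mem_nil, or_false] at hp
      rcases hp with rfl
      exact hy
    · exact ⟨L, hL, by rintro rfl; simp at hlen, haH⟩
  obtain ⟨L₀, hL₀, hne₀, hmem₀⟩ := step1
  by_cases hh : (L₀.map Sigma.fst).head? = some j
  · exact ⟨L₀, hL₀, hne₀, hmem₀, hh⟩
  · by_cases hl : (L₀.map Sigma.fst).getLast? = some j
    · refine ⟨invL L₀, red_invL hL₀, ?_, ?_, ?_⟩
      · simp [invL]; rintro rfl; simp at hne₀
      · rw [prodP_invL]; exact inv_mem hmem₀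
      · rw [invL_fst, List.head?_reverse]; exact hl
    · -- both ends are !j ; conjugate by a letter of index j
      obtain ⟨w, hw⟩ := nonsur hφ (H := H) j (hHj j)
      have hne' : L₀.map Sigma.fst ≠ [] := by simpa using hne₀
      refine ⟨⟨j, w⟩ :: (L₀ ++ [⟨j, w⁻¹⟩]), ⟨?_, ?_⟩, by simp, ?_, by simp⟩
      · intro p hp
        simp only [List.mem_cons, List.mem_append, List.mem_singleton, List.not_mem_nil,
          or_false] at hp
        rcases hp with rfl | hp | rfl
        · exact hw
        · exact hL₀.1 p hp
        · simpa using hw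
      · rw [List.isChain_cons]
        constructor
        · intro b hb
          rw [List.head?_append_of_ne_nil _ hne₀] at hb
          intro hjb
          apply hh
          have hbe : L₀.head? = some b := hb
          rw [List.head?_map, hbe]
          simpa using hjb.symm
        · rw [List.isChain_append]
          refine ⟨hL₀.2, List.isChain_singleton _, ?_⟩
          intro x hx y hy
          simp only [List.head?_cons, Option.mem_def, Option.some.injEq] at hy
          subst hy
          intro hxy
          apply hl
          rw [List.getLast?_map, hx]
          simp [hxy]
      · have : prodP φ (⟨j, w⟩ :: (L₀ ++ [⟨j, w⁻¹⟩])) =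
            PushoutI.of (φ := φ) j w * prodP φ L₀ * (PushoutI.of (φ := φ) j w)⁻¹ := by
          rw [prodP_cons, prodP_append, prodP_singleton, map_inv, mul_assoc]
        rw [this]
        exact hnormal.conj_mem _ hmem₀ _

end Work6

section Work7
open List
variable {A : Type} [Group A] {Gf : Bool → Type} [∀ i, Group (Gf i)]
  {φ : ∀ i : Bool, A →* Gf i}

theorem pow_list {H : Subgroup (PushoutI φ)} {j : Bool} {Z : List (Σ i, Gf i)}
    (hZ : Red φ Z) (hne : Z ≠ []) (hmem : prodP φ Z ∈ H)
    (hhead : (Z.map Sigma.fst).head? = some j)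
    (hlast : (Z.map Sigma.fst).getLast? = some (!j)) :
    ∀ n : ℕ, ∃ W : List (Σ i, Gf i), Red φ W ∧ W ≠ [] ∧ prodP φ W ∈ H ∧ n ≤ W.length ∧
      (W.map Sigma.fst).head? = some j ∧ (W.map Sigma.fst).getLast? = some (!j)
  | 0 => ⟨Z, hZ, hne, hmem, by omega, hhead, hlast⟩
  | (n + 1) => by
    obtain ⟨W', hW', hne', hmem', hlen', hhead', hlast'⟩ := pow_list hZ hne hmem hhead hlast n
    have hmapne : (Z.map Sigma.fst) ≠ [] := by simpa using hne
    have hmapne' : (W'.map Sigma.fst) ≠ [] := by simpa using hne'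
    refine ⟨Z ++ W', ⟨?_, ?_⟩, by simp [hne], ?_, ?_, ?_, ?_⟩
    · intro p hp
      rcases List.mem_append.mp hp with hp | hp
      · exact hZ.1 p hp
      · exact hW'.1 p hp
    · rw [List.isChain_append]
      refine ⟨hZ.2, hW'.2, ?_⟩
      intro x hx y hy
      have hx1 : x.1 = !j := by
        have : (Z.map Sigma.fst).getLast? = some x.1 := by
          rw [List.getLast?_map, show Z.getLast? = some x from hx]; rfl
        rw [this] at hlast; simpa using hlast
      have hy1 : y.1 = j := by
        have : (W'.map Sigma.fst).head? = some y.1 := by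
          rw [List.head?_map, show W'.head? = some y from hy]; rfl
        rw [this] at hhead'; simpa using hhead'
      rw [hx1, hy1]; cases j <;> simp
    · rw [prodP_append]; exact mul_mem hmem hmem'
    · have : 1 ≤ Z.length := by
        cases Z with | nil => simp at hne | cons _ _ => simp
      simp only [List.length_append]; omega
    · rw [List.map_append, List.head?_append_of_ne_nil _ hmapne]; exact hhead
    · rw [List.map_append, List.getLast?_append_of_ne_nil _ hmapne']; exact hlast'

end Work7

section Work8
open List
variable {A : Type} [Group A] {Gf : Bool → Type} [∀ i, Group (Gf i)]
  {φ : ∀ i : Bool, A →* Gf i}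

theorem sandwich {H : Subgroup (PushoutI φ)} (hnormal : H.Normal) {Z : List (Σ i, Gf i)}
    (hZ : Red φ Z) (hne : Z ≠ []) (hmem : prodP φ Z ∈ H) {j t : Bool} (hjt : t ≠ j)
    {w : Gf t} (hw : w ∉ (φ t).range)
    (hhead : (Z.map Sigma.fst).head? = some j)
    (hlast : (Z.map Sigma.fst).getLast? = some j) :
    ∃ Z'' : List (Σ i, Gf i), Red φ Z'' ∧ Z'' ≠ [] ∧ prodP φ Z'' ∈ H ∧
      (Z''.map Sigma.fst).head? = some t ∧ (Z''.map Sigma.fst).getLast? = some t := by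
  refine ⟨⟨t, w⟩ :: (Z ++ [⟨t, w⁻¹⟩]), ⟨?_, ?_⟩, by simp, ?_, by simp, ?_⟩
  · intro p hp
    simp only [List.mem_cons, List.mem_append, List.mem_singleton, List.not_mem_nil,
      or_false] at hp
    rcases hp with rfl | hp | rfl
    · exact hw
    · exact hZ.1 p hp
    · simpa using hw
  · rw [List.isChain_cons]
    constructor
    · intro b hb
      rw [List.head?_append_of_ne_nil _ hne] at hb
      intro htb
      have hbe : Z.head? = some b := hb
      rw [List.head?_map, hbe] at hhead
      apply hjt
      have : b.1 = j := by simpa using hhead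
      exact htb.trans this
    · rw [List.isChain_append]
      refine ⟨hZ.2, List.isChain_singleton _, ?_⟩
      intro x hx y hy
      simp only [List.head?_cons, Option.mem_def, Option.some.injEq] at hy
      subst hy
      rw [List.getLast?_map, show Z.getLast? = some x from hx] at hlast
      have : x.1 = j := by simpa using hlast
      simp only [this]
      exact fun h => hjt h.symm
  · have : prodP φ (⟨t, w⟩ :: (Z ++ [⟨t, w⁻¹⟩])) =
        PushoutI.of (φ := φ) t w * prodP φ Z * (PushoutI.of (φ := φ) t w)⁻¹ := by
      rw [prodP_cons, prodP_append, prodP_singleton, map_inv, mul_assoc]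
    rw [this]
    exact hnormal.conj_mem _ hmem _
  · rw [show (⟨t, w⟩ :: (Z ++ [⟨t, w⁻¹⟩]) : List (Σ i, Gf i)).map Sigma.fst =
      (⟨t, w⟩ :: Z).map Sigma.fst ++ [t] by simp]
    rw [List.getLast?_append_of_ne_nil _ (by simp)]
    rfl

theorem directional' (hφ : ∀ i, Function.Injective (φ i)) {H : Subgroup (PushoutI φ)}
    (hnormal : H.Normal)
    (h1 : ¬ H ≤ (PushoutI.of (φ := φ) true).range)
    (h2 : ¬ H ≤ (PushoutI.of (φ := φ) false).range) (j : Bool) :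
    ∃ Z : List (Σ i, Gf i), Red φ Z ∧ Z ≠ [] ∧ prodP φ Z ∈ H ∧
      (Z.map Sigma.fst).head? = some j ∧ (Z.map Sigma.fst).getLast? = some (!j) := by
  obtain ⟨Z, hZ, hne, hmem, hhead⟩ := directional hφ hnormal h1 h2 j
  have hmapne : (Z.map Sigma.fst) ≠ [] := by simpa using hne
  obtain ⟨l, hl⟩ := Option.ne_none_iff_exists'.mp (by
    simpa using List.getLast?_isSome.mpr hmapne : (Z.map Sigma.fst).getLast? ≠ none)
  by_cases hlj : l = !j
  · exact ⟨Z, hZ, hne, hmem, hhead, hlj ▸ hl⟩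
  · have hlj' : l = j := by revert hlj; cases j <;> cases l <;> simp
    rw [hlj'] at hl
    have hH' : ¬ H ≤ (PushoutI.of (φ := φ) (!(!j))).range := by
      cases j
      · exact h2
      · exact h1
    obtain ⟨w, hw⟩ := nonsur hφ (H := H) (!j) hH'
    obtain ⟨Z'', hZ'', hne'', hmem'', hhead'', hlast''⟩ :=
      sandwich hnormal hZ hne hmem (by cases j <;> simp) hw hhead hl
    have hmapne'' : (Z''.map Sigma.fst) ≠ [] := by simpa using hne''
    refine ⟨Z ++ Z'', ⟨?_, ?_⟩, by simp [hne], ?_, ?_, ?_⟩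
    · intro p hp
      rcases List.mem_append.mp hp with hp | hp
      · exact hZ.1 p hp
      · exact hZ''.1 p hp
    · rw [List.isChain_append]
      refine ⟨hZ.2, hZ''.2, ?_⟩
      intro x hx y hy
      rw [List.getLast?_map, show Z.getLast? = some x from hx] at hl
      rw [List.head?_map, show Z''.head? = some y from hy] at hhead''
      have hx1 : x.1 = j := by simpa using hl
      have hy1 : y.1 = !j := by simpa using hhead''
      rw [hx1, hy1]
      cases j <;> simp
    · rw [prodP_append]; exact mul_mem hmem hmem''
    · rw [List.map_append, List.head?_append_of_ne_nil _ hmapne]; exact hhead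
    · rw [List.map_append, List.getLast?_append_of_ne_nil _ hmapne'']
      exact hlast''

end Work8

section Work9
open List
variable {A : Type} [Group A] {Gf : Bool → Type} [∀ i, Group (Gf i)]
  {φ : ∀ i : Bool, A →* Gf i}

theorem main_aux (hφ : ∀ i, Function.Injective (φ i)) (H : Subgroup (PushoutI φ))
    (hnormal : H.Normal)
    (h1 : ¬ H ≤ (PushoutI.of (φ := φ) true).range)
    (h2 : ¬ H ≤ (PushoutI.of (φ := φ) false).range) :
    ∀ c : PushoutI φ, IsEssentialCoset φ H c := by
  intro c
  rcases exists_red hφ c with ⟨i, y, rfl⟩ | ⟨C, hC, hClen, rfl⟩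
  · -- c is a factor element
    obtain ⟨Z, hZ, hne, hmem, hhead⟩ := directional hφ hnormal h1 h2 i
    obtain ⟨z₀, Z', rfl⟩ : ∃ z₀ Z', Z = z₀ :: Z' := by
      cases Z with
      | nil => exact absurd rfl hne
      | cons z₀ Z' => exact ⟨z₀, Z', rfl⟩
    have hz₀ : z₀.1 = i := by simpa using hhead
    refine Or.inr ⟨(z₀ :: Z').map fun p => PushoutI.of (φ := φ) p.1 p.2, 0,
      PushoutI.of (φ := φ) i y, red_decomp hφ hZ hne, hmem,
      by simp only [List.length_map, List.length_cons]; omega, ?_, ?_⟩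
    · refine ⟨i, PushoutI.of (φ := φ) z₀.1 z₀.2, by simp, ?_, ⟨y, rfl⟩⟩
      rw [← hz₀]
      exact ⟨z₀.2, rfl⟩
    · have : PushoutI.of (φ := φ) i y *
          (((((z₀ :: Z').map fun p => PushoutI.of (φ := φ) p.1 p.2).take 0).prod *
            PushoutI.of (φ := φ) i y))⁻¹ = 1 := by simp
      rw [this]
      exact one_mem H
  · -- c is the product of a reduced list of length ≥ 2
    have hCne : C ≠ [] := by rintro rfl; simp at hClen
    set k := C.length with hk
    set cl := C.getLast hCne with hcl
    have hclast : (C.map Sigma.fst).getLast? = some cl.1 := by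
      rw [List.getLast?_map, List.getLast?_eq_getLast hCne]
      rfl
    obtain ⟨Z, hZ, hZne, hZmem, hZhead, hZlast⟩ := directional' hφ hnormal h1 h2 (!cl.1)
    obtain ⟨W, hW, hWne, hWmem, hWlen, hWhead, hWlast⟩ :=
      pow_list hZ hZne hZmem hZhead hZlast (k + 3)
    have hmapCne : (C.map Sigma.fst) ≠ [] := by simpa using hCne
    have hmapWne : (W.map Sigma.fst) ≠ [] := by simpa using hWne
    have hU : Red φ (C ++ W) := by
      refine ⟨?_, ?_⟩
      · intro p hp
        rcases List.mem_append.mp hp with hp | hp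
        · exact hC.1 p hp
        · exact hW.1 p hp
      · rw [List.isChain_append]
        refine ⟨hC.2, hW.2, ?_⟩
        intro x hx y hy
        have hx1 : x.1 = cl.1 := by
          rw [List.getLast?_map, show C.getLast? = some x from hx] at hclast
          simpa using hclast
        have hy1 : y.1 = !cl.1 := by
          rw [List.head?_map, show W.head? = some y from hy] at hWhead
          simpa using hWhead
        rw [hx1, hy1]
        cases cl.1 <;> simp
    have hUlen : (invL C).length + 2 ≤ (C ++ W).length := by
      rw [invL_length, List.length_append]
      omega
    obtain ⟨R, hR, hRprod, hRlen, hRtake⟩ := mul_word hφ (invL C) (C ++ W) hU hUlen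
    rw [invL_length, List.length_append] at hRlen hRtake
    have hWlen' : k + 3 ≤ W.length := hWlen
    have hRmem : prodP φ R ∈ H := by
      rw [hRprod, prodP_append, prodP_invL]
      exact hnormal.conj_mem _ hWmem _
    have hRlen2 : W.length ≤ R.length := by omega
    have hRne : R ≠ [] := by
      rintro rfl
      simp only [List.length_nil] at hRlen2
      omega
    have hd : k + W.length - k - 2 = W.length - 2 := by omega
    rw [hd] at hRtake
    have hgetR : R[k]? = (C ++ W)[k]? := by
      have := congrArg (fun l => l[k]?) hRtake
      simp only [List.getElem?_take, if_pos (show k < W.length - 2 by omega)] at this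
      exact this
    obtain ⟨w₀, W', rfl⟩ : ∃ w₀ W', W = w₀ :: W' := by
      cases W with
      | nil => exact absurd rfl hWne
      | cons w₀ W' => exact ⟨w₀, W', rfl⟩
    have hw₀ : w₀.1 = !cl.1 := by simpa using hWhead
    have hgetCW : (C ++ w₀ :: W')[k]? = some w₀ := by
      rw [hk, List.getElem?_append_right (le_refl _)]
      simp
    have htakeC : R.take k = C := by
      have e1 : R.take k = (C ++ w₀ :: W').take k :=
        take_eq_of_take_eq (by omega) hRtake
      rw [e1, hk, List.take_left]
    refine Or.inr ⟨R.map fun p => PushoutI.of (φ := φ) p.1 p.2, k, 1,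
      by exact red_decomp hφ hR hRne, by exact hRmem, ?_, ?_, ?_⟩
    · rw [List.length_map]
      omega
    · refine ⟨!cl.1, PushoutI.of (φ := φ) w₀.1 w₀.2, ?_, ?_, ⟨1, map_one _⟩⟩
      · rw [List.getElem?_map, hgetR, hgetCW]
        rfl
      · rw [← hw₀]
        exact ⟨w₀.2, rfl⟩
    · have htk : ((R.map fun p => PushoutI.of (φ := φ) p.1 p.2).take k).prod = prodP φ C := by
        rw [← List.map_take, htakeC]
        rfl
      rw [htk]
      have : prodP φ C * (prodP φ C * 1)⁻¹ = 1 := by simp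
      rw [this]
      exact one_mem H



/-- If `H` is a nontrivial finitely generated normal subgroup of the amalgam
`G = G₁ *_A G₂` of finite groups that is not contained in either factor, then every
right coset of `H` in `G` is essential. -/
theorem normal_fg_not_in_factors_all_cosets_essential
    (A : Type) [Group A] (Gf : Bool → Type) [∀ i, Group (Gf i)] [∀ i, Finite (Gf i)]
    (φ : ∀ i : Bool, A →* Gf i) (hφ : ∀ i, Function.Injective (φ i))
    (H : Subgroup (PushoutI φ)) (hne : H ≠ ⊥) (hfg : H.FG) (hnormal : H.Normal)
    (h1 : ¬ H ≤ (PushoutI.of (φ := φ) true).range)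
    (h2 : ¬ H ≤ (PushoutI.of (φ := φ) false).range) :
    ∀ c : PushoutI φ, IsEssentialCoset φ H c := by
  intro c
  exact main_aux hφ H hnormal h1 h2 c
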